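/- The unique positive root ζ_c of ζ = 5/2 - (1/2)e^{-2ζ} satisfies 2.4966 < ζ_c < 2.4967, and in particular ζ_c < 5/2. -/

import Mathlib

/-- Monotonicity helper: f(x) = x - 5/2 + (1/2)exp(-2x) is nondecreasing on (0,∞). -/
lemma bracelet_mono (a b : ℝ) (ha : 0 < a) (hab : a ≤ b) :
    a - 5/2 + (1/2) * Real.exp (-2 * a) ≤ b - 5/2 + (1/2) * Real.exp (-2 * b) := by
  have h1 : Real.exp (-2 * a) * Real.exp (-2 * (b - a)) = Real.exp (-2 * b) := by
    rw [← Real.exp_add]; ring_nf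
  have h2 : (-2 * (b - a)) + 1 ≤ Real.exp (-2 * (b - a)) := Real.add_one_le_exp _
  have h3 : Real.exp (-2 * a) < 1 := Real.exp_lt_one_iff.mpr (by linarith)
  have h4 : 0 < Real.exp (-2 * a) := Real.exp_pos _
  nlinarith [mul_le_mul_of_nonneg_left h2 h4.le]

lemma exp5_lt : Real.exp 5 < (2.7182818286:ℝ)^5 := by
  have := Real.exp_one_lt_d9
  calc Real.exp 5 = Real.exp 1 ^ (5:ℕ) := by
        rw [Real.exp_one_pow]; norm_num
    _ < (2.7182818286:ℝ)^5 := by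
        gcongr <;> first | exact (Real.exp_pos 1).le | skip
lemma exp5_gt : (2.7182818283:ℝ)^5 < Real.exp 5 := by
  have := Real.exp_one_gt_d9
  calc ((2.7182818283:ℝ))^5 < Real.exp 1 ^ (5:ℕ) := by gcongr <;> norm_num
    _ = Real.exp 5 := by rw [Real.exp_one_pow]; norm_num

lemma hlow : Real.exp (-2 * (2.4966:ℝ)) < 0.0068 := by
  have h1 : Real.exp (-2 * (2.4966:ℝ)) * Real.exp 5 = Real.exp 0.0068 := by
    rw [← Real.exp_add]; norm_num
  have h2 : Real.exp (0.0068:ℝ) * Real.exp (-0.0068) = 1 := by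
    rw [← Real.exp_add]; norm_num
  have h3 : (0.9932:ℝ) < Real.exp (-0.0068) := by
    have := Real.add_one_le_exp (-0.0068:ℝ)
    -- need strict; use add_one_lt_exp for x ≠ 0
    have := Real.add_one_lt_exp (show (-0.0068:ℝ) ≠ 0 by norm_num)
    linarith
  have h4 := exp5_gt
  have h5 : (0:ℝ) < Real.exp (-0.0068) := Real.exp_pos _
  have h6 : Real.exp (0.0068:ℝ) < 1/0.9932 := by
    rw [lt_div_iff₀ (by norm_num)]
    nlinarith
  have h7 : (0:ℝ) < Real.exp 5 := Real.exp_pos _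
  have : Real.exp (-2 * (2.4966:ℝ)) = Real.exp 0.0068 / Real.exp 5 := by
    rw [← h1, mul_div_cancel_right₀ _ h7.ne']
  rw [this, div_lt_iff₀ h7]
  nlinarith

lemma hhigh : (0.0066:ℝ) < Real.exp (-2 * (2.4967:ℝ)) := by
  have h1 : Real.exp (-2 * (2.4967:ℝ)) * Real.exp (4.9934) = 1 := by
    rw [← Real.exp_add]; norm_num
  have h2 : Real.exp (4.9934:ℝ) < Real.exp 5 := Real.exp_lt_exp.mpr (by norm_num)
  have h3 := exp5_lt
  have h4 : (0:ℝ) < Real.exp 4.9934 := Real.exp_pos _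
  have h5 : Real.exp (-2 * (2.4967:ℝ)) = 1 / Real.exp 4.9934 := by
    rw [eq_div_iff h4.ne']; exact h1
  rw [h5, lt_div_iff₀ h4]
  nlinarith

/-- The unique positive root ζ_c of ζ = 5/2 - (1/2)e^{-2ζ} satisfies
2.4966 < ζ_c < 2.4967, and in particular ζ_c < 5/2. -/
theorem bracelet_threshold_bounds (ζc : ℝ)
    (h : 0 < ζc ∧ ζc = 5/2 - (1/2) * Real.exp (-2 * ζc)) :
    2.4966 < ζc ∧ ζc < 2.4967 ∧ ζc < 5/2 := by
  obtain ⟨hpos, heq⟩ := h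
  have hexp : 0 < Real.exp (-2 * ζc) := Real.exp_pos _
  have hf : ζc - 5/2 + (1/2) * Real.exp (-2 * ζc) = 0 := by linarith
  constructor
  · by_contra hle
    push_neg at hle
    have := bracelet_mono ζc 2.4966 hpos hle
    have := hlow
    linarith
  constructor
  · by_contra hle
    push_neg at hle
    have := bracelet_mono 2.4967 ζc (by norm_num) hle
    have := hhigh
    linarith
  · linarith
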